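/- Under the stated assumptions, for all complex numbers x, y with 0 < |x| ≤ 1 and 0 < |y| ≤ 1, all the series below converge absolutely and the functional equation −R(x,y)·π(x,y) = Σ_{(k,ℓ)∈E} R^{(k,ℓ)}(x,y)·π_{k,ℓ}·x^k y^ℓ + Σ_{ℓ=0}^{J⁻−1} R^{S'_ℓ}(x,y)·π^{S'_ℓ}(x,y) + Σ_{k=0}^{I⁻−1} R^{S''_k}(x,y)·π^{S''_k}(x,y) holds. -/

import Mathlib

/-!
The fundamental functional equation (equation (1.3.4) of [FIM], equation (4) of
Fayolle–Raschel) for the stationary probabilities of a random walk in the quarter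
plane with arbitrary big (bounded below) jumps: for `0 < |x| ≤ 1` and
`0 < |y| ≤ 1`, all the generating series converge absolutely and
`−R(x,y)·π(x,y) = Σ_{(k,ℓ)∈E} R^{(k,ℓ)}(x,y)·π_{k,ℓ}·x^k y^ℓ
  + Σ_{ℓ=0}^{J⁻−1} R^{S'_ℓ}(x,y)·π^{S'_ℓ}(x,y)
  + Σ_{k=0}^{I⁻−1} R^{S''_k}(x,y)·π^{S''_k}(x,y)`.
-/

noncomputable section
open scoped Classical

/-- The interior class `S = {(i,j) : i ≥ I⁻, j ≥ J⁻}`. -/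
def Sclass (Im Jm : ℕ) : Set (ℕ × ℕ) := {p | Im ≤ p.1 ∧ Jm ≤ p.2}

/-- The horizontal classes: `S'_ℓ = {(i,ℓ) : i ≥ I⁻}` for `1 ≤ ℓ ≤ J⁻ − 1`, and
`S'_0 = {(i,0) : i ≥ I⁰}`. -/
def Shoriz (Im I0 : ℕ) (l : ℕ) : Set (ℕ × ℕ) :=
  if l = 0 then {p | p.2 = 0 ∧ I0 ≤ p.1} else {p | p.2 = l ∧ Im ≤ p.1}

/-- The vertical classes: `S''_k = {(k,j) : j ≥ J⁻}` for `1 ≤ k ≤ I⁻ − 1`, and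
`S''_0 = {(0,j) : j ≥ J⁰}`. -/
def Svert (Jm J0 : ℕ) (k : ℕ) : Set (ℕ × ℕ) :=
  if k = 0 then {p | p.1 = 0 ∧ J0 ≤ p.2} else {p | p.1 = k ∧ Jm ≤ p.2}

/-- The (finite) set of isolated points
`E = ({0,…,I⁻−1} × {0,…,J⁻−1}) ∪ {(i,0) : I⁻ ≤ i ≤ I⁰−1} ∪ {(0,j) : J⁻ ≤ j ≤ J⁰−1}`. -/
def EFin (Im Jm I0 J0 : ℕ) : Finset (ℕ × ℕ) :=
  (Finset.range Im ×ˢ Finset.range Jm)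
    ∪ (Finset.Ico Im I0).image (fun i => (i, 0))
    ∪ (Finset.Ico Jm J0).image (fun j => ((0 : ℕ), j))

/-- Index type enumerating all the homogeneity classes: the interior class,
the `J⁻` horizontal classes, the `I⁻` vertical classes, and one singleton class
for each isolated point of `E`. -/
def Idx (Im Jm I0 J0 : ℕ) : Type :=
  Unit ⊕ Fin Jm ⊕ Fin Im ⊕ {e // e ∈ EFin Im Jm I0 J0}

/-- The class associated with each index. -/
def classOf (Im Jm I0 J0 : ℕ) : Idx Im Jm I0 J0 → Set (ℕ × ℕ)
  | Sum.inl _ => Sclass Im Jm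
  | Sum.inr (Sum.inl l) => Shoriz Im I0 l
  | Sum.inr (Sum.inr (Sum.inl k)) => Svert Jm J0 k
  | Sum.inr (Sum.inr (Sum.inr e)) => {e.1}

/-- The jump from state `q` to state `q'`, an element of ℤ². -/
def jumpOf (q q' : ℕ × ℕ) : ℤ × ℤ := ((q'.1 : ℤ) - (q.1 : ℤ), (q'.2 : ℤ) - (q.2 : ℤ))

/-- Generating function `R^C(x,y) = −1 + Σ_{(m,n)} p^C(m,n)·x^m y^n` of a jump
distribution (the sum is a finite sum since `p` is finitely supported). -/
def Rgen (p : ℤ × ℤ → ℝ) (x y : ℂ) : ℂ :=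
  -1 + ∑' m : ℤ × ℤ, (p m : ℂ) * x ^ m.1 * y ^ m.2

/-- Generating function `Σ_{(i,j)∈C} π(i,j)·x^i y^j` of the stationary
probabilities restricted to a class `C ⊆ ℤ₊²`. -/
def piGen (π : ℕ × ℕ → ℝ) (C : Set (ℕ × ℕ)) (x y : ℂ) : ℂ :=
  ∑' q : ℕ × ℕ, (if q ∈ C then (π q : ℂ) else 0) * x ^ q.1 * y ^ q.2

instance fintypeIdx (Im Jm I0 J0 : ℕ) : Fintype (Idx Im Jm I0 J0) := by
  unfold Idx; infer_instance

lemma sum_idx {Im Jm I0 J0 : ℕ} {M : Type*} [AddCommMonoid M] (g : Idx Im Jm I0 J0 → M) :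
    ∑ i : Idx Im Jm I0 J0, g i
      = g (Sum.inl ())
        + (∑ l : Fin Jm, g (Sum.inr (Sum.inl l)))
        + (∑ k : Fin Im, g (Sum.inr (Sum.inr (Sum.inl k))))
        + ∑ e ∈ (EFin Im Jm I0 J0).attach, g (Sum.inr (Sum.inr (Sum.inr e))) := by
  let g' : (Unit ⊕ Fin Jm ⊕ Fin Im ⊕ {e // e ∈ EFin Im Jm I0 J0}) → M := g
  have h : ∑ i : Idx Im Jm I0 J0, g i
      = ∑ i : Unit ⊕ Fin Jm ⊕ Fin Im ⊕ {e // e ∈ EFin Im Jm I0 J0}, g' i := rfl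
  rw [h, Fintype.sum_sum_type, Fintype.sum_sum_type, Fintype.sum_sum_type,
    Finset.univ_eq_attach]
  simp only [g', add_assoc]
  exact congrArg (· + _) (Fintype.sum_unique _)

-- membership characterizations
lemma mem_E_iff {Im Jm I0 J0 : ℕ} {e : ℕ × ℕ} :
    e ∈ EFin Im Jm I0 J0 ↔
      (e.1 < Im ∧ e.2 < Jm) ∨ (Im ≤ e.1 ∧ e.1 < I0 ∧ e.2 = 0) ∨ (e.1 = 0 ∧ Jm ≤ e.2 ∧ e.2 < J0) := by
  simp only [EFin, Finset.mem_union, Finset.mem_product, Finset.mem_range, Finset.mem_image,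
    Finset.mem_Ico, Prod.ext_iff]
  constructor
  · rintro ((⟨h1,h2⟩ | ⟨i, ⟨h1,h2⟩, h3, h4⟩) | ⟨j, ⟨h1,h2⟩, h3, h4⟩) <;> omega
  · rintro (⟨h1,h2⟩ | ⟨h1,h2,h3⟩ | ⟨h1,h2,h3⟩)
    · exact Or.inl (Or.inl ⟨h1,h2⟩)
    · exact Or.inl (Or.inr ⟨e.1, ⟨h1,h2⟩, rfl, h3.symm⟩)
    · exact Or.inr ⟨e.2, ⟨h2,h3⟩, h1.symm, rfl⟩

lemma mem_class_unique {Im Jm I0 J0 : ℕ} (hIm : 1 ≤ Im) (hJm : 1 ≤ Jm)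
    (hI0 : Im ≤ I0) (hJ0 : Jm ≤ J0) {q : ℕ × ℕ} {i i' : Idx Im Jm I0 J0}
    (h : q ∈ classOf Im Jm I0 J0 i) (h' : q ∈ classOf Im Jm I0 J0 i') : i = i' := by
  have key : ∀ j : Idx Im Jm I0 J0, q ∈ classOf Im Jm I0 J0 j →
      (j = Sum.inl () ∧ Im ≤ q.1 ∧ Jm ≤ q.2) ∨
      (∃ l : Fin Jm, j = Sum.inr (Sum.inl l) ∧ q.2 = (l : ℕ) ∧ Im ≤ q.1 ∧
        ((l : ℕ) = 0 → I0 ≤ q.1)) ∨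
      (∃ k : Fin Im, j = Sum.inr (Sum.inr (Sum.inl k)) ∧ q.1 = (k : ℕ) ∧ Jm ≤ q.2 ∧
        ((k : ℕ) = 0 → J0 ≤ q.2)) ∨
      (∃ e : {e // e ∈ EFin Im Jm I0 J0}, j = Sum.inr (Sum.inr (Sum.inr e)) ∧ q = e.1) := by
    rintro (⟨⟩ | l | k | e) hj
    · exact Or.inl ⟨rfl, hj⟩
    · refine Or.inr (Or.inl ⟨l, rfl, ?_⟩)
      simp only [classOf, Shoriz] at hj
      split at hj
      · rename_i h0
        simp only [Set.mem_setOf_eq] at hj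
        exact ⟨by omega, by omega, fun _ => hj.2⟩
      · simp only [Set.mem_setOf_eq] at hj
        rename_i h0
        exact ⟨hj.1, hj.2, fun hc => absurd hc h0⟩
    · refine Or.inr (Or.inr (Or.inl ⟨k, rfl, ?_⟩))
      simp only [classOf, Svert] at hj
      split at hj
      · rename_i h0
        simp only [Set.mem_setOf_eq] at hj
        exact ⟨by omega, by omega, fun _ => hj.2⟩
      · simp only [Set.mem_setOf_eq] at hj
        rename_i h0
        exact ⟨hj.1, hj.2, fun hc => absurd hc h0⟩
    · exact Or.inr (Or.inr (Or.inr ⟨e, rfl, by simpa [classOf] using hj⟩))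
  rcases key i h with ⟨rfl,a1,a2⟩|⟨l,rfl,b1,b2,b3⟩|⟨k,rfl,c1,c2,c3⟩|⟨e,rfl,he⟩ <;>
    rcases key i' h' with ⟨rfl,a1',a2'⟩|⟨l',rfl,b1',b2',b3'⟩|⟨k',rfl,c1',c2',c3'⟩|⟨e',rfl,he'⟩
  · rfl
  · exfalso; have := l'.isLt; omega
  · exfalso; have := k'.isLt; omega
  · exfalso
    have hq1 : q.1 = e'.1.1 := by rw [he']
    have hq2 : q.2 = e'.1.2 := by rw [he']
    have hE := mem_E_iff.mp e'.2; omega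
  · exfalso; have := l.isLt; omega
  · have hll : l = l' := Fin.ext (by omega); rw [hll]
  · exfalso; have := l.isLt; omega
  · exfalso
    have hq1 : q.1 = e'.1.1 := by rw [he']
    have hq2 : q.2 = e'.1.2 := by rw [he']
    have hE := mem_E_iff.mp e'.2
    by_cases hl : (l : ℕ) = 0
    · have := b3 hl; omega
    · omega
  · exfalso; have := k.isLt; omega
  · exfalso; have := l'.isLt; omega
  · have hkk : k = k' := Fin.ext (by omega); rw [hkk]
  · exfalso
    have hq1 : q.1 = e'.1.1 := by rw [he']
    have hq2 : q.2 = e'.1.2 := by rw [he']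
    have hE := mem_E_iff.mp e'.2
    by_cases hk : (k : ℕ) = 0
    · have := c3 hk; omega
    · omega
  · exfalso
    have hq1 : q.1 = e.1.1 := by rw [he]
    have hq2 : q.2 = e.1.2 := by rw [he]
    have hE := mem_E_iff.mp e.2; omega
  · exfalso
    have hq1 : q.1 = e.1.1 := by rw [he]
    have hq2 : q.2 = e.1.2 := by rw [he]
    have hE := mem_E_iff.mp e.2
    by_cases hl : (l' : ℕ) = 0
    · have := b3' hl; omega
    · omega
  · exfalso
    have hq1 : q.1 = e.1.1 := by rw [he]
    have hq2 : q.2 = e.1.2 := by rw [he]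
    have hE := mem_E_iff.mp e.2
    by_cases hk : (k' : ℕ) = 0
    · have := c3' hk; omega
    · omega
  · have hee : e = e' := Subtype.ext (he.symm.trans he'); rw [hee]

lemma piGen_singleton (π : ℕ × ℕ → ℝ) (e : ℕ × ℕ) (x y : ℂ) :
    piGen π {e} x y = (π e : ℂ) * x ^ e.1 * y ^ e.2 := by
  unfold piGen
  rw [tsum_eq_single e (fun q hq => by simp [hq])]
  simp

lemma znorm_le_one {x : ℂ} (hx1 : ‖x‖ ≤ 1) {e : ℤ} (he : 0 ≤ e) : ‖x ^ e‖ ≤ 1 := by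
  lift e to ℕ using he
  rw [zpow_natCast, norm_pow]
  exact pow_le_one₀ (norm_nonneg x) hx1

set_option maxHeartbeats 2000000 in
/-- The fundamental functional equation: for any stationary distribution `π` of
the spatially homogeneous Markov chain on ℤ₊² described by the per-class jump
distributions `p`, and all `x, y ∈ ℂ` with `0 < |x| ≤ 1`, `0 < |y| ≤ 1`, all
the series converge absolutely and
`−R(x,y)·π(x,y) = Σ_{(k,ℓ)∈E} R^{(k,ℓ)}(x,y)·π_{k,ℓ}·x^k y^ℓ
  + Σ_{ℓ<J⁻} R^{S'_ℓ}(x,y)·π^{S'_ℓ}(x,y) + Σ_{k<I⁻} R^{S''_k}(x,y)·π^{S''_k}(x,y)`. -/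
theorem functional_equation (Im Jm I0 J0 : ℕ)
    (hIm : 1 ≤ Im) (hJm : 1 ≤ Jm) (hI0 : Im ≤ I0) (hJ0 : Jm ≤ J0)
    -- the jump distributions, one for each class
    (p : Idx Im Jm I0 J0 → ℤ × ℤ → ℝ)
    (hp0 : ∀ i m, 0 ≤ p i m) (hp1 : ∀ i m, p i m ≤ 1)
    (hpfin : ∀ i, (Function.support (p i)).Finite)
    (hpsum : ∀ i, HasSum (p i) 1)
    -- jumps from a state of a class stay in the quarter plane
    (hpres : ∀ i, ∀ q ∈ classOf Im Jm I0 J0 i, ∀ m : ℤ × ℤ, 0 < p i m →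
      0 ≤ (q.1 : ℤ) + m.1 ∧ 0 ≤ (q.2 : ℤ) + m.2)
    -- `cl q` is the homogeneity class containing the state `q`
    (cl : ℕ × ℕ → Idx Im Jm I0 J0) (hcl : ∀ q, q ∈ classOf Im Jm I0 J0 (cl q))
    -- the stationary distribution of the kernel `K(q,q') = p^{C(q)}(q' − q)`
    (π : ℕ × ℕ → ℝ) (hπ0 : ∀ q, 0 ≤ π q) (hπ1 : ∀ q, π q ≤ 1) (hπsum : HasSum π 1)
    (hstat : ∀ q' : ℕ × ℕ,
      HasSum (fun q : ℕ × ℕ => π q * p (cl q) (jumpOf q q')) (π q'))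
    (x y : ℂ) (hx0 : 0 < ‖x‖) (hx1 : ‖x‖ ≤ 1) (hy0 : 0 < ‖y‖) (hy1 : ‖y‖ ≤ 1) :
    -- absolute convergence of all the series involved
    (∀ i, Summable (fun m : ℤ × ℤ => ‖(p i m : ℂ) * x ^ m.1 * y ^ m.2‖)) ∧
    (∀ C : Set (ℕ × ℕ),
      Summable (fun q : ℕ × ℕ => ‖(if q ∈ C then (π q : ℂ) else 0) * x ^ q.1 * y ^ q.2‖)) ∧
    -- the functional equation
    -(Rgen (p (Sum.inl ())) x y) * piGen π (Sclass Im Jm) x y =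
      (∑ e ∈ (EFin Im Jm I0 J0).attach,
        Rgen (p (Sum.inr (Sum.inr (Sum.inr e)))) x y
          * ((π e.1 : ℂ) * x ^ (e.1.1 : ℕ) * y ^ (e.1.2 : ℕ)))
      + (∑ l : Fin Jm,
        Rgen (p (Sum.inr (Sum.inl l))) x y * piGen π (Shoriz Im I0 (l : ℕ)) x y)
      + (∑ k : Fin Im,
        Rgen (p (Sum.inr (Sum.inr (Sum.inl k)))) x y * piGen π (Svert Jm J0 (k : ℕ)) x y) := by
  have hxne : x ≠ 0 := by simpa using hx0.ne'
  have hyne : y ≠ 0 := by simpa using hy0.ne'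
  -- summability of jump series
  have hsumP : ∀ i, Summable (fun m : ℤ × ℤ => ‖(p i m : ℂ) * x ^ m.1 * y ^ m.2‖) := by
    intro i
    apply summable_of_ne_finset_zero (s := (hpfin i).toFinset)
    intro m hm
    have h0 : p i m = 0 := by
      by_contra h0
      exact hm ((hpfin i).mem_toFinset.mpr h0)
    simp [h0]
  -- summability of the indicator series
  have hsumPi : ∀ C : Set (ℕ × ℕ),
      Summable (fun q : ℕ × ℕ => ‖(if q ∈ C then (π q : ℂ) else 0) * x ^ q.1 * y ^ q.2‖) := by
    intro C
    apply Summable.of_nonneg_of_le (fun q => norm_nonneg _) _ hπsum.summable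
    intro q
    by_cases hq : q ∈ C
    · rw [if_pos hq]
      calc ‖(π q : ℂ) * x ^ q.1 * y ^ q.2‖ = π q * ‖x‖ ^ q.1 * ‖y‖ ^ q.2 := by
            rw [norm_mul, norm_mul, norm_pow, norm_pow, Complex.norm_real,
              Real.norm_of_nonneg (hπ0 q)]
        _ ≤ π q * 1 * 1 := by
            apply mul_le_mul (mul_le_mul le_rfl (pow_le_one₀ (norm_nonneg x) hx1)
              (pow_nonneg (norm_nonneg x) _) (hπ0 q)) (pow_le_one₀ (norm_nonneg y) hy1)
              (pow_nonneg (norm_nonneg y) _) (mul_nonneg (hπ0 q) zero_le_one)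
        _ = π q := by ring
    · simp [hq, hπ0 q]
  refine ⟨hsumP, hsumPi, ?_⟩
  set f : ℕ × ℕ → ℂ := fun q => (π q : ℂ) * x ^ q.1 * y ^ q.2 with hf
  set F : (ℕ × ℕ) × (ℤ × ℤ) → ℂ := fun z =>
    (π z.1 : ℂ) * ((p (cl z.1) z.2 : ℂ) * x ^ ((z.1.1 : ℤ) + z.2.1)
      * y ^ ((z.1.2 : ℤ) + z.2.2)) with hF
  have hg : Summable (fun z : (ℕ × ℕ) × (ℤ × ℤ) => π z.1 * p (cl z.1) z.2) := by
    rw [summable_prod_of_nonneg (fun z => mul_nonneg (hπ0 _) (hp0 _ _))]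
    refine ⟨fun q => by simpa using (hpsum (cl q)).summable.mul_left (π q), ?_⟩
    have heq : ∀ q : ℕ × ℕ, (∑' m : ℤ × ℤ, π q * p (cl q) m) = π q := fun q => by
      rw [tsum_mul_left, (hpsum (cl q)).tsum_eq, mul_one]
    exact hπsum.summable.congr (fun q => (heq q).symm)
  have hFs : Summable F := by
    apply Summable.of_norm_bounded hg
    rintro ⟨q, m⟩
    by_cases hp : p (cl q) m = 0
    · simp [hF, hp, mul_nonneg (hπ0 q) (hp0 (cl q) m)]
    · have hppos : 0 < p (cl q) m := (hp0 _ _).lt_of_ne (Ne.symm hp)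
      obtain ⟨h1, h2⟩ := hpres (cl q) q (hcl q) m hppos
      have hnorm : ‖F (q, m)‖ = π q * (p (cl q) m
          * (‖x ^ ((q.1 : ℤ) + m.1)‖ * ‖y ^ ((q.2 : ℤ) + m.2)‖)) := by
        simp only [hF, norm_mul, Complex.norm_real, Real.norm_of_nonneg (hπ0 q),
          Real.norm_of_nonneg (hp0 (cl q) m)]
        ring
      rw [hnorm]
      calc π q * (p (cl q) m * (‖x ^ ((q.1 : ℤ) + m.1)‖ * ‖y ^ ((q.2 : ℤ) + m.2)‖))
          ≤ π q * (p (cl q) m * 1) := by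
            have hb : ‖x ^ ((q.1 : ℤ) + m.1)‖ * ‖y ^ ((q.2 : ℤ) + m.2)‖ ≤ 1 :=
              mul_le_one₀ (znorm_le_one hx1 h1) (norm_nonneg _) (znorm_le_one hy1 h2)
            exact mul_le_mul_of_nonneg_left
              (mul_le_mul_of_nonneg_left hb (hp0 _ _)) (hπ0 q)
        _ = π q * p (cl q) m := by ring
  have hjs : ∀ i, Summable (fun m : ℤ × ℤ => (p i m : ℂ) * x ^ m.1 * y ^ m.2) :=
    fun i => (hsumP i).of_norm
  have hrow : ∀ q : ℕ × ℕ, HasSum (fun m : ℤ × ℤ => F (q, m))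
      (f q * (1 + Rgen (p (cl q)) x y)) := by
    intro q
    have h1 : HasSum (fun m : ℤ × ℤ => (p (cl q) m : ℂ) * x ^ m.1 * y ^ m.2)
        (1 + Rgen (p (cl q)) x y) := by
      have hrw : 1 + Rgen (p (cl q)) x y
          = ∑' m : ℤ × ℤ, (p (cl q) m : ℂ) * x ^ m.1 * y ^ m.2 := by
        rw [Rgen]; ring
      rw [hrw]
      exact (hjs (cl q)).hasSum
    have h3 := h1.mul_left (f q)
    have hfun : (fun m : ℤ × ℤ => F (q, m))
        = fun m => f q * ((p (cl q) m : ℂ) * x ^ m.1 * y ^ m.2) := by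
      funext m
      simp only [hF, hf]
      rw [zpow_add₀ hxne, zpow_add₀ hyne, zpow_natCast, zpow_natCast]
      ring
    rw [hfun]
    exact h3
  have hT := hFs.hasSum
  set T : ℂ := ∑' z : (ℕ × ℕ) × (ℤ × ℤ), F z with hTdef
  have hA : HasSum (fun q : ℕ × ℕ => f q * (1 + Rgen (p (cl q)) x y)) T :=
    hT.prod_fiberwise hrow
  set G : (ℕ × ℕ) × (ℕ × ℕ) → ℂ := fun z =>
    (π z.1 : ℂ) * (p (cl z.1) (jumpOf z.1 z.2) : ℂ) * x ^ z.2.1 * y ^ z.2.2 with hG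
  set ι : (ℕ × ℕ) × (ℕ × ℕ) → (ℕ × ℕ) × (ℤ × ℤ) := fun z => (z.1, jumpOf z.1 z.2) with hι
  have hinj : Function.Injective ι := by
    rintro ⟨⟨a, b⟩, ⟨c, d⟩⟩ ⟨⟨a', b'⟩, ⟨c', d'⟩⟩ hz
    simp only [hι, jumpOf, Prod.mk.injEq] at hz
    simp only [Prod.mk.injEq]
    omega
  have hFι : ∀ z : (ℕ × ℕ) × (ℕ × ℕ), F (ι z) = G z := by
    rintro ⟨q, q'⟩
    simp only [hF, hG, hι, jumpOf]
    have e1 : (q.1 : ℤ) + ((q'.1 : ℤ) - (q.1 : ℤ)) = (q'.1 : ℤ) := by ring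
    have e2 : (q.2 : ℤ) + ((q'.2 : ℤ) - (q.2 : ℤ)) = (q'.2 : ℤ) := by ring
    rw [e1, e2, zpow_natCast, zpow_natCast]
    ring
  have hsupp : Function.support F ⊆ Set.range ι := by
    rintro ⟨q, m⟩ hz
    have hp : p (cl q) m ≠ 0 := by
      intro h0
      exact hz (by simp [hF, h0])
    have hppos : 0 < p (cl q) m := (hp0 _ _).lt_of_ne (Ne.symm hp)
    obtain ⟨h1, h2⟩ := hpres (cl q) q (hcl q) m hppos
    refine ⟨(q, (((q.1 : ℤ) + m.1).toNat, ((q.2 : ℤ) + m.2).toNat)), ?_⟩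
    simp only [hι, jumpOf]
    have hg1 : ((((q.1 : ℤ) + m.1).toNat : ℤ)) - (q.1 : ℤ) = m.1 := by omega
    have hg2 : ((((q.2 : ℤ) + m.2).toNat : ℤ)) - (q.2 : ℤ) = m.2 := by omega
    exact Prod.ext rfl (Prod.ext hg1 hg2)
  have hGs : Summable G := (hFs.comp_injective hinj).congr (fun z => hFι z)
  have hGT : HasSum G T := by
    have hTs : ∑' z : (ℕ × ℕ) × (ℕ × ℕ), G z = T := by
      rw [hTdef, ← hinj.tsum_eq hsupp]
      exact tsum_congr (fun z => (hFι z).symm)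
    exact hTs ▸ hGs.hasSum
  have hcol : ∀ q' : ℕ × ℕ, HasSum (fun q : ℕ × ℕ => G (q, q')) (f q') := by
    intro q'
    have h0 : HasSum (fun q : ℕ × ℕ => ((π q * p (cl q) (jumpOf q q') : ℝ) : ℂ))
        ((π q' : ℝ) : ℂ) := Complex.hasSum_ofReal.mpr (hstat q')
    have h1 := h0.mul_right (x ^ q'.1 * y ^ q'.2)
    have hfun : (fun q : ℕ × ℕ => G (q, q'))
        = fun q => ((π q * p (cl q) (jumpOf q q') : ℝ) : ℂ) * (x ^ q'.1 * y ^ q'.2) := by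
      funext q
      simp only [hG]
      push_cast
      ring
    rw [hfun]
    have hval : (f q' : ℂ) = ((π q' : ℝ) : ℂ) * (x ^ q'.1 * y ^ q'.2) := by
      simp only [hf]; ring
    rw [hval]
    exact h1
  have hswap : HasSum (fun z : (ℕ × ℕ) × (ℕ × ℕ) => G (z.2, z.1)) T :=
    ((Equiv.prodComm (ℕ × ℕ) (ℕ × ℕ)).hasSum_iff).mpr hGT
  have hB : HasSum f T := hswap.prod_fiberwise hcol
  have hC : HasSum (fun q : ℕ × ℕ => f q * Rgen (p (cl q)) x y) 0 := by
    have hsub := hA.sub hB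
    rw [sub_self] at hsub
    have hfun : (fun q : ℕ × ℕ => f q * (1 + Rgen (p (cl q)) x y) - f q)
        = fun q => f q * Rgen (p (cl q)) x y := by
      funext q; ring
    rwa [hfun] at hsub
  have hclass : ∀ i : Idx Im Jm I0 J0,
      HasSum (fun q : ℕ × ℕ => ((if q ∈ classOf Im Jm I0 J0 i then (π q : ℂ) else 0)
          * x ^ q.1 * y ^ q.2) * Rgen (p i) x y)
        (piGen π (classOf Im Jm I0 J0 i) x y * Rgen (p i) x y) :=
    fun i => (((hsumPi _).of_norm).hasSum).mul_right _
  have hsum_classes : HasSum (fun q : ℕ × ℕ => ∑ i : Idx Im Jm I0 J0,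
      ((if q ∈ classOf Im Jm I0 J0 i then (π q : ℂ) else 0) * x ^ q.1 * y ^ q.2)
        * Rgen (p i) x y)
      (∑ i : Idx Im Jm I0 J0, piGen π (classOf Im Jm I0 J0 i) x y * Rgen (p i) x y) :=
    hasSum_sum (fun i _ => hclass i)
  have hpoint : ∀ q : ℕ × ℕ, (∑ i : Idx Im Jm I0 J0,
      ((if q ∈ classOf Im Jm I0 J0 i then (π q : ℂ) else 0) * x ^ q.1 * y ^ q.2)
        * Rgen (p i) x y) = f q * Rgen (p (cl q)) x y := by
    intro q
    rw [Finset.sum_eq_single (cl q)]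
    · rw [if_pos (hcl q), hf]
    · intro i _ hne
      have hnot : q ∉ classOf Im Jm I0 J0 i := fun hmem =>
        hne (mem_class_unique hIm hJm hI0 hJ0 hmem (hcl q))
      simp [hnot]
    · intro habs
      exact absurd (Finset.mem_univ _) habs
  have hzero : (∑ i : Idx Im Jm I0 J0,
      piGen π (classOf Im Jm I0 J0 i) x y * Rgen (p i) x y) = 0 := by
    have h1 := hsum_classes
    rw [show (fun q : ℕ × ℕ => ∑ i : Idx Im Jm I0 J0,
        ((if q ∈ classOf Im Jm I0 J0 i then (π q : ℂ) else 0) * x ^ q.1 * y ^ q.2)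
          * Rgen (p i) x y) = fun q => f q * Rgen (p (cl q)) x y from funext hpoint] at h1
    exact h1.unique hC
  rw [sum_idx] at hzero
  have hE' : (∑ e ∈ (EFin Im Jm I0 J0).attach,
      piGen π (classOf Im Jm I0 J0 (Sum.inr (Sum.inr (Sum.inr e)))) x y
        * Rgen (p (Sum.inr (Sum.inr (Sum.inr e)))) x y)
      = ∑ e ∈ (EFin Im Jm I0 J0).attach,
        Rgen (p (Sum.inr (Sum.inr (Sum.inr e)))) x y
          * ((π e.1 : ℂ) * x ^ (e.1.1 : ℕ) * y ^ (e.1.2 : ℕ)) := by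
    refine Finset.sum_congr rfl (fun e _ => ?_)
    rw [show classOf Im Jm I0 J0 (Sum.inr (Sum.inr (Sum.inr e))) = {e.1} from rfl,
      piGen_singleton]
    ring
  have hH' : (∑ l : Fin Jm,
      piGen π (classOf Im Jm I0 J0 (Sum.inr (Sum.inl l))) x y
        * Rgen (p (Sum.inr (Sum.inl l))) x y)
      = ∑ l : Fin Jm, Rgen (p (Sum.inr (Sum.inl l))) x y * piGen π (Shoriz Im I0 (l : ℕ)) x y := by
    refine Finset.sum_congr rfl (fun l _ => ?_)
    rw [show classOf Im Jm I0 J0 (Sum.inr (Sum.inl l)) = Shoriz Im I0 (l : ℕ) from rfl]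
    ring
  have hV' : (∑ k : Fin Im,
      piGen π (classOf Im Jm I0 J0 (Sum.inr (Sum.inr (Sum.inl k)))) x y
        * Rgen (p (Sum.inr (Sum.inr (Sum.inl k)))) x y)
      = ∑ k : Fin Im, Rgen (p (Sum.inr (Sum.inr (Sum.inl k)))) x y
          * piGen π (Svert Jm J0 (k : ℕ)) x y := by
    refine Finset.sum_congr rfl (fun k _ => ?_)
    rw [show classOf Im Jm I0 J0 (Sum.inr (Sum.inr (Sum.inl k))) = Svert Jm J0 (k : ℕ) from rfl]
    ring
  rw [hE', hH', hV'] at hzero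
  rw [show classOf Im Jm I0 J0 (Sum.inl ()) = Sclass Im Jm from rfl] at hzero
  linear_combination -hzero

end
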